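/- Let ρ ∈ (-1,1) and fix γ₁, γ₂ ∈ ℝ. Define η(ψ) = (1−ρ²)/[√({ψ(1−ρ²)+γ₁²−2ργ₁γ₂+γ₂²}(m₁(ψ)²−2ρm₁(ψ)m₂(ψ)+m₂(ψ)²)) − m₁(ψ)(γ₁−ργ₂) − m₂(ψ)(γ₂−ργ₁)] with mᵢ(ψ) = (γᵢ + √(ψ+γᵢ²))/ψ. Then η(ψ) → √((1+ρ)/2) as ψ → ∞. -/

import Mathlib

open Filter

theorem sqrt_tendsto_atTop' : Tendsto Real.sqrt atTop atTop := by
  refine tendsto_atTop.2 fun b => ?_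
  filter_upwards [eventually_ge_atTop (b ^ 2)] with x hx
  calc b ≤ |b| := le_abs_self b
    _ = Real.sqrt (b ^ 2) := (Real.sqrt_sq_eq_abs b).symm
    _ ≤ Real.sqrt x := Real.sqrt_le_sqrt hx

theorem s_tendsto (γ : ℝ) :
    Tendsto (fun ψ : ℝ => (γ + Real.sqrt (ψ + γ ^ 2)) / Real.sqrt ψ) atTop (nhds 1) := by
  have h0 : Tendsto (fun ψ : ℝ => γ / Real.sqrt ψ) atTop (nhds 0) :=
    tendsto_const_nhds.div_atTop sqrt_tendsto_atTop'
  have h1 : Tendsto (fun ψ : ℝ => Real.sqrt (ψ + γ ^ 2) / Real.sqrt ψ) atTop (nhds 1) := by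
    have hquot : Tendsto (fun ψ : ℝ => 1 + γ ^ 2 / ψ) atTop (nhds 1) := by
      simpa using tendsto_const_nhds.add (tendsto_const_nhds.div_atTop (tendsto_id (α := ℝ)))
    have := hquot.sqrt
    rw [Real.sqrt_one] at this
    refine this.congr' ?_
    filter_upwards [eventually_gt_atTop (0 : ℝ)] with ψ hψ
    rw [show (1 : ℝ) + γ ^ 2 / ψ = (ψ + γ ^ 2) / ψ by field_simp,
      Real.sqrt_div (by positivity)]
  have := h0.add h1
  rw [zero_add] at this
  refine this.congr fun ψ => ?_
  rw [add_div]

/-- As `ψ → ∞`, the GH residual tail dependence coefficient converges to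
`√((1+ρ)/2)`, regardless of the skewness parameters. -/
theorem gh_eta_tendsto_elliptical (ρ γ₁ γ₂ : ℝ)
    (hρ : ρ ∈ Set.Ioo (-1 : ℝ) 1) :
    Tendsto (fun ψ : ℝ =>
        (1 - ρ ^ 2) /
          (Real.sqrt ((ψ * (1 - ρ ^ 2) + γ₁ ^ 2 - 2 * ρ * γ₁ * γ₂ + γ₂ ^ 2) *
              (((γ₁ + Real.sqrt (ψ + γ₁ ^ 2)) / ψ) ^ 2
                - 2 * ρ * ((γ₁ + Real.sqrt (ψ + γ₁ ^ 2)) / ψ) *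
                    ((γ₂ + Real.sqrt (ψ + γ₂ ^ 2)) / ψ)
                + ((γ₂ + Real.sqrt (ψ + γ₂ ^ 2)) / ψ) ^ 2))
            - ((γ₁ + Real.sqrt (ψ + γ₁ ^ 2)) / ψ) * (γ₁ - ρ * γ₂)
            - ((γ₂ + Real.sqrt (ψ + γ₂ ^ 2)) / ψ) * (γ₂ - ρ * γ₁)))
      atTop (nhds (Real.sqrt ((1 + ρ) / 2))) := by
  obtain ⟨hρ1, hρ2⟩ := hρ
  have hρ1' : 0 < 1 + ρ := by linarith
  have hρ2' : 0 < 1 - ρ := by linarith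
  have hρsq : 0 < 1 - ρ ^ 2 := by nlinarith
  set s : ℝ → ℝ → ℝ := fun γ ψ => (γ + Real.sqrt (ψ + γ ^ 2)) / Real.sqrt ψ with hs_def
  set C : ℝ := γ₁ ^ 2 - 2 * ρ * γ₁ * γ₂ + γ₂ ^ 2 with hC
  -- limits of pieces
  have hs1 : Tendsto (s γ₁) atTop (nhds 1) := s_tendsto γ₁
  have hs2 : Tendsto (s γ₂) atTop (nhds 1) := s_tendsto γ₂
  have hCdiv : Tendsto (fun ψ : ℝ => (1 - ρ ^ 2) + C / ψ) atTop (nhds (1 - ρ ^ 2)) := by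
    simpa using tendsto_const_nhds.add (tendsto_const_nhds.div_atTop (tendsto_id (α := ℝ)))
  have hB : Tendsto (fun ψ : ℝ => (s γ₁ ψ) ^ 2 - 2 * ρ * (s γ₁ ψ) * (s γ₂ ψ) + (s γ₂ ψ) ^ 2)
      atTop (nhds (2 - 2 * ρ)) := by
    have := ((hs1.pow 2).sub (((tendsto_const_nhds (x := (2 * ρ))).mul hs1).mul hs2)).add
      (hs2.pow 2)
    convert this using 2 <;> ring
  have hsqrtAB : Tendsto
      (fun ψ : ℝ => Real.sqrt (((1 - ρ ^ 2) + C / ψ) *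
        ((s γ₁ ψ) ^ 2 - 2 * ρ * (s γ₁ ψ) * (s γ₂ ψ) + (s γ₂ ψ) ^ 2)))
      atTop (nhds (Real.sqrt ((1 - ρ ^ 2) * (2 - 2 * ρ)))) :=
    (hCdiv.mul hB).sqrt
  have hinv : Tendsto (fun ψ : ℝ => (Real.sqrt ψ)⁻¹) atTop (nhds 0) :=
    sqrt_tendsto_atTop'.inv_tendsto_atTop
  have hm1 : Tendsto (fun ψ : ℝ => s γ₁ ψ / Real.sqrt ψ * (γ₁ - ρ * γ₂)) atTop (nhds 0) := by
    have := (hs1.mul hinv).mul (tendsto_const_nhds (x := (γ₁ - ρ * γ₂)))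
    simpa [div_eq_mul_inv] using this
  have hm2 : Tendsto (fun ψ : ℝ => s γ₂ ψ / Real.sqrt ψ * (γ₂ - ρ * γ₁)) atTop (nhds 0) := by
    have := (hs2.mul hinv).mul (tendsto_const_nhds (x := (γ₂ - ρ * γ₁)))
    simpa [div_eq_mul_inv] using this
  set L : ℝ := Real.sqrt ((1 - ρ ^ 2) * (2 - 2 * ρ)) with hL
  have hLpos : 0 < L := Real.sqrt_pos.2 (by nlinarith)
  have hD : Tendsto (fun ψ : ℝ =>
      Real.sqrt (((1 - ρ ^ 2) + C / ψ) *
        ((s γ₁ ψ) ^ 2 - 2 * ρ * (s γ₁ ψ) * (s γ₂ ψ) + (s γ₂ ψ) ^ 2))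
      - s γ₁ ψ / Real.sqrt ψ * (γ₁ - ρ * γ₂)
      - s γ₂ ψ / Real.sqrt ψ * (γ₂ - ρ * γ₁)) atTop (nhds L) := by
    have := (hsqrtAB.sub hm1).sub hm2
    simpa using this
  have hval : (1 - ρ ^ 2) / L = Real.sqrt ((1 + ρ) / 2) := by
    rw [div_eq_iff hLpos.ne', hL, ← Real.sqrt_mul (by positivity),
      show (1 + ρ) / 2 * ((1 - ρ ^ 2) * (2 - 2 * ρ)) = (1 - ρ ^ 2) ^ 2 by ring,
      Real.sqrt_sq hρsq.le]
  have hmain : Tendsto (fun ψ : ℝ => (1 - ρ ^ 2) /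
      (Real.sqrt (((1 - ρ ^ 2) + C / ψ) *
        ((s γ₁ ψ) ^ 2 - 2 * ρ * (s γ₁ ψ) * (s γ₂ ψ) + (s γ₂ ψ) ^ 2))
      - s γ₁ ψ / Real.sqrt ψ * (γ₁ - ρ * γ₂)
      - s γ₂ ψ / Real.sqrt ψ * (γ₂ - ρ * γ₁))) atTop (nhds (Real.sqrt ((1 + ρ) / 2))) := by
    rw [← hval]
    exact tendsto_const_nhds.div hD hLpos.ne'
  refine hmain.congr' ?_
  filter_upwards [eventually_gt_atTop (0 : ℝ)] with ψ hψ
  have hsq : Real.sqrt ψ * Real.sqrt ψ = ψ := Real.mul_self_sqrt hψ.le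
  have hsψ : Real.sqrt ψ ≠ 0 := by positivity
  have hm : ∀ γ : ℝ, (γ + Real.sqrt (ψ + γ ^ 2)) / ψ = s γ ψ / Real.sqrt ψ := by
    intro γ
    rw [hs_def]
    field_simp
    rw [Real.sq_sqrt hψ.le]; ring
  have harg : (ψ * (1 - ρ ^ 2) + γ₁ ^ 2 - 2 * ρ * γ₁ * γ₂ + γ₂ ^ 2) *
      (((γ₁ + Real.sqrt (ψ + γ₁ ^ 2)) / ψ) ^ 2
        - 2 * ρ * ((γ₁ + Real.sqrt (ψ + γ₁ ^ 2)) / ψ) * ((γ₂ + Real.sqrt (ψ + γ₂ ^ 2)) / ψ)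
        + ((γ₂ + Real.sqrt (ψ + γ₂ ^ 2)) / ψ) ^ 2) =
      ((1 - ρ ^ 2) + C / ψ) *
        ((s γ₁ ψ) ^ 2 - 2 * ρ * (s γ₁ ψ) * (s γ₂ ψ) + (s γ₂ ψ) ^ 2) := by
    rw [hm γ₁, hm γ₂]
    simp only [hs_def, hC]
    set t₁ := Real.sqrt (ψ + γ₁ ^ 2) with ht₁
    set t₂ := Real.sqrt (ψ + γ₂ ^ 2) with ht₂
    set r := Real.sqrt ψ with hr
    rw [← hsq]
    field_simp
    ring
  rw [harg, hm γ₁, hm γ₂]
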